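/- Let G=(V,E) with |V|=n and let V'_1,...,V'_k be (not necessarily disjoint) b-eternal sets, s = max_j |V'_j|, and for each vertex v_i let a_i be the number of sets V'_j containing v_i. Under independent random initial coloring with blue-probability p_b, the probability that the process reaches an all-red generation is at most exp(-k^2 p_b^{2s} / (2 * sum_i a_i^2)). -/

import Mathlib

open scoped Classical

/-- Number of blue neighbors of `v`. -/
def blueCount {V : Type*} [Fintype V] [DecidableEq V] (G : SimpleGraph V)
    [DecidableRel G.Adj] (g : V → Bool) (v : V) : ℕ :=
  ((G.neighborFinset v).filter fun u => g u = true).card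

/-- Number of red neighbors of `v`. -/
def redCount {V : Type*} [Fintype V] [DecidableEq V] (G : SimpleGraph V)
    [DecidableRel G.Adj] (g : V → Bool) (v : V) : ℕ :=
  ((G.neighborFinset v).filter fun u => g u = false).card

/-- One synchronous step of the majority model: each vertex adopts the strict-majority
color of its neighborhood, keeping its current color in case of a tie. -/
def majStep {V : Type*} [Fintype V] [DecidableEq V] (G : SimpleGraph V)
    [DecidableRel G.Adj] (g : V → Bool) : V → Bool :=
  fun v =>
    if redCount G g v < blueCount G g v then true
    else if blueCount G g v < redCount G g v then false
    else g v

/-- One synchronous step of the biased majority model: ties become blue. -/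
def bmajStep {V : Type*} [Fintype V] [DecidableEq V] (G : SimpleGraph V)
    [DecidableRel G.Adj] (g : V → Bool) : V → Bool :=
  fun v => decide (redCount G g v ≤ blueCount G g v)

/-- Probability, under the product measure where each vertex is blue (`true`)
independently with probability `p`, of the event `E`. -/
noncomputable def pr {α : Type*} [Fintype α] [DecidableEq α] (p : ℝ)
    (E : (α → Bool) → Prop) : ℝ :=
  ∑ g : α → Bool, if E g then (∏ v, if g v = true then p else 1 - p) else 0


set_option linter.unusedSectionVars false
set_option linter.unusedVariables false
set_option maxHeartbeats 2000000


open scoped Classical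

namespace Stmt4Aux

variable {V : Type*} [Fintype V] [DecidableEq V]

noncomputable def wB (p : ℝ) (b : Bool) : ℝ := if b = true then p else 1 - p

noncomputable def wt (p : ℝ) (g : V → Bool) : ℝ := ∏ v, wB p (g v)

noncomputable def Sm (p : ℝ) : List V → ((V → Bool) → ℝ) → (V → Bool) → ℝ
  | [], f, g => f g
  | v :: l, f, g => p * Sm p l f (Function.update g v true)
      + (1 - p) * Sm p l f (Function.update g v false)

variable {p : ℝ}

lemma wB_nonneg (hp0 : 0 ≤ p) (hp1 : p ≤ 1) (b : Bool) : 0 ≤ wB p b := by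
  cases b <;> simp [wB] <;> linarith

lemma wt_nonneg (hp0 : 0 ≤ p) (hp1 : p ≤ 1) (g : V → Bool) : 0 ≤ wt p g :=
  Finset.prod_nonneg fun v _ => wB_nonneg hp0 hp1 _

lemma sum_wt : ∑ g : V → Bool, wt p g = 1 := by
  have : ∑ g : V → Bool, ∏ v, wB p (g v) = ∏ v : V, ∑ b : Bool, wB p b :=
    (Fintype.prod_sum _).symm
  simp only [wt, this]
  have h1 : ∑ b : Bool, wB p b = 1 := by simp [wB]
  rw [h1]
  simp

lemma Sm_congr {l : List V} {f f' : (V → Bool) → ℝ} :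
    ∀ g : V → Bool, (∀ x, (∀ v, v ∉ l → x v = g v) → f x = f' x) →
      Sm p l f g = Sm p l f' g := by
  induction l with
  | nil => intro g h; exact h g fun v _ => rfl
  | cons v l ih =>
    intro g h
    simp only [Sm]
    have h' : ∀ (b : Bool) x, (∀ u, u ∉ l → x u = Function.update g v b u) → f x = f' x := by
      intro b x hx
      refine h x fun u hu => ?_
      by_cases huv : u = v
      · subst huv; simp at hu
      · have := hx u (fun hul => hu (List.mem_cons_of_mem _ hul))
        rwa [Function.update_of_ne huv] at this
    rw [ih _ (h' true), ih _ (h' false)]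

lemma Sm_indep {l : List V} {f : (V → Bool) → ℝ} :
    ∀ g g' : V → Bool, (∀ v, v ∉ l → g v = g' v) → Sm p l f g = Sm p l f g' := by
  induction l with
  | nil =>
    intro g g' h
    have : g = g' := funext fun v => h v (by simp)
    rw [this]
  | cons v l ih =>
    intro g g' h
    simp only [Sm]
    have hb : ∀ b : Bool, Sm p l f (Function.update g v b) = Sm p l f (Function.update g' v b) := by
      intro b
      refine ih _ _ fun u hu => ?_
      by_cases huv : u = v
      · subst huv; simp
      · rw [Function.update_of_ne huv, Function.update_of_ne huv]
        exact h u (by simp [huv, hu])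
    rw [hb true, hb false]

lemma Sm_mono (hp0 : 0 ≤ p) (hp1 : p ≤ 1) {l : List V} {f f' : (V → Bool) → ℝ}
    (h : ∀ x, f x ≤ f' x) : ∀ g, Sm p l f g ≤ Sm p l f' g := by
  induction l with
  | nil => intro g; exact h g
  | cons v l ih =>
    intro g
    simp only [Sm]
    have h1p : (0:ℝ) ≤ 1 - p := by linarith
    exact add_le_add (mul_le_mul_of_nonneg_left (ih _) hp0)
      (mul_le_mul_of_nonneg_left (ih _) h1p)

lemma Sm_const (c : ℝ) {l : List V} : ∀ g : V → Bool, Sm p l (fun _ => c) g = c := by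
  induction l with
  | nil => intro g; rfl
  | cons v l ih => intro g; simp only [Sm, ih]; ring

lemma Sm_add {l : List V} (f f' : (V → Bool) → ℝ) :
    ∀ g, Sm p l (fun x => f x + f' x) g = Sm p l f g + Sm p l f' g := by
  induction l with
  | nil => intro g; rfl
  | cons v l ih => intro g; simp only [Sm, ih]; ring

lemma Sm_smul {l : List V} (c : ℝ) (f : (V → Bool) → ℝ) :
    ∀ g, Sm p l (fun x => c * f x) g = c * Sm p l f g := by
  induction l with
  | nil => intro g; rfl
  | cons v l ih => intro g; simp only [Sm, ih]; ring

lemma Sm_sub {l : List V} (f f' : (V → Bool) → ℝ) (g : V → Bool) :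
    Sm p l (fun x => f x - f' x) g = Sm p l f g - Sm p l f' g := by
  have := Sm_add (p := p) (l := l) f (fun x => (-1 : ℝ) * f' x) g
  simp only [Sm_smul] at this
  have h2 : (fun x => f x + (-1 : ℝ) * f' x) = fun x => f x - f' x := by
    funext x; ring
  rw [h2] at this
  rw [this]; ring

lemma Sm_abs (hp0 : 0 ≤ p) (hp1 : p ≤ 1) {l : List V} (f : (V → Bool) → ℝ) :
    ∀ g, |Sm p l f g| ≤ Sm p l (fun x => |f x|) g := by
  induction l with
  | nil => intro g; exact le_rfl
  | cons v l ih =>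
    intro g
    simp only [Sm]
    have h1p : (0:ℝ) ≤ 1 - p := by linarith
    calc |p * Sm p l f (Function.update g v true)
          + (1 - p) * Sm p l f (Function.update g v false)|
        ≤ |p * Sm p l f (Function.update g v true)|
          + |(1 - p) * Sm p l f (Function.update g v false)| := abs_add_le _ _
      _ = p * |Sm p l f (Function.update g v true)|
          + (1 - p) * |Sm p l f (Function.update g v false)| := by
            rw [abs_mul, abs_mul, abs_of_nonneg hp0, abs_of_nonneg h1p]
      _ ≤ p * Sm p l (fun x => |f x|) (Function.update g v true)
          + (1 - p) * Sm p l (fun x => |f x|) (Function.update g v false) :=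
            add_le_add (mul_le_mul_of_nonneg_left (ih _) hp0)
              (mul_le_mul_of_nonneg_left (ih _) h1p)

lemma Sm_update {l : List V} {v : V} (hv : v ∉ l) (f : (V → Bool) → ℝ) (b : Bool) :
    ∀ g, Sm p l f (Function.update g v b) = Sm p l (fun x => f (Function.update x v b)) g := by
  induction l with
  | nil => intro g; rfl
  | cons u l ih =>
    intro g
    have hvu : v ≠ u := fun h => hv (h ▸ List.mem_cons_self)
    have hvl : v ∉ l := fun h => hv (List.mem_cons_of_mem _ h)
    simp only [Sm]
    have hc : ∀ c : Bool, Function.update (Function.update g v b) u c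
        = Function.update (Function.update g u c) v b :=
      fun c => Function.update_comm hvu b c g
    rw [hc true, hc false, ih hvl, ih hvl]

end Stmt4Aux

namespace Stmt4Aux

variable {V : Type*} [Fintype V] [DecidableEq V] {p : ℝ}

noncomputable def Ex (p : ℝ) (f : (V → Bool) → ℝ) : ℝ := ∑ g : V → Bool, wt p g * f g

lemma sum_flip (v : V) (T : (V → Bool) → ℝ)
    (hT : ∀ g c, T (Function.update g v c) = T g) :
    ∑ g ∈ Finset.univ.filter (fun g : V → Bool => ¬ g v = true), T g
      = ∑ g ∈ Finset.univ.filter (fun g : V → Bool => g v = true), T g := by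
  refine Finset.sum_nbij' (fun g => Function.update g v true)
    (fun g => Function.update g v false) ?_ ?_ ?_ ?_ ?_
  · intro g _; simp
  · intro g _; simp
  · intro g hg
    simp only [Finset.mem_filter, Bool.not_eq_true] at hg
    simp only [Function.update_idem]
    rw [← hg.2, Function.update_eq_self]
  · intro g hg
    simp only [Finset.mem_filter] at hg
    simp only [Function.update_idem]
    rw [← hg.2, Function.update_eq_self]
  · intro g _; exact (hT g true).symm

lemma Ex_step (v : V) (h : (V → Bool) → ℝ) :
    Ex p (fun g => p * h (Function.update g v true) + (1 - p) * h (Function.update g v false))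
      = Ex p h := by
  classical
  set W' : (V → Bool) → ℝ := fun g => ∏ u ∈ Finset.univ.erase v, wB p (g u) with hW'def
  have hwt : ∀ g : V → Bool, wt p g = wB p (g v) * W' g := fun g =>
    (Finset.mul_prod_erase Finset.univ (fun u => wB p (g u)) (Finset.mem_univ v)).symm
  have hW' : ∀ (g : V → Bool) (c : Bool), W' (Function.update g v c) = W' g := by
    intro g c
    refine Finset.prod_congr rfl fun u hu => ?_
    rw [Function.update_of_ne (Finset.ne_of_mem_erase hu)]
  have key : ∀ b : Bool, (∑ g : V → Bool, wt p g * h (Function.update g v b))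
      = ∑ g ∈ Finset.univ.filter (fun g : V → Bool => g v = true),
          W' g * h (Function.update g v b) := by
    intro b
    rw [← Finset.sum_filter_add_sum_filter_not Finset.univ
      (fun g : V → Bool => g v = true) (fun g => wt p g * h (Function.update g v b))]
    have h1 : ∑ g ∈ Finset.univ.filter (fun g : V → Bool => g v = true),
        wt p g * h (Function.update g v b)
        = ∑ g ∈ Finset.univ.filter (fun g : V → Bool => g v = true),
          p * (W' g * h (Function.update g v b)) := by
      refine Finset.sum_congr rfl fun g hg => ?_
      simp only [Finset.mem_filter] at hg
      rw [hwt g, hg.2]; simp [wB]; ring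
    have h2 : ∑ g ∈ Finset.univ.filter (fun g : V → Bool => ¬ g v = true),
        wt p g * h (Function.update g v b)
        = ∑ g ∈ Finset.univ.filter (fun g : V → Bool => ¬ g v = true),
          (1 - p) * (W' g * h (Function.update g v b)) := by
      refine Finset.sum_congr rfl fun g hg => ?_
      simp only [Finset.mem_filter, Bool.not_eq_true] at hg
      rw [hwt g, hg.2]; simp [wB]; ring
    rw [h1, h2, ← Finset.mul_sum, ← Finset.mul_sum,
      sum_flip v _ (fun g c => by rw [hW', Function.update_idem])]
    ring
  have rhs : Ex p h = p * (∑ g ∈ Finset.univ.filter (fun g : V → Bool => g v = true),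
        W' g * h (Function.update g v true))
      + (1 - p) * (∑ g ∈ Finset.univ.filter (fun g : V → Bool => g v = true),
        W' g * h (Function.update g v false)) := by
    rw [Ex, ← Finset.sum_filter_add_sum_filter_not Finset.univ
      (fun g : V → Bool => g v = true) (fun g => wt p g * h g)]
    have h1 : ∑ g ∈ Finset.univ.filter (fun g : V → Bool => g v = true), wt p g * h g
        = ∑ g ∈ Finset.univ.filter (fun g : V → Bool => g v = true),
          p * (W' g * h (Function.update g v true)) := by
      refine Finset.sum_congr rfl fun g hg => ?_
      simp only [Finset.mem_filter] at hg
      rw [hwt g, hg.2]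
      have : Function.update g v true = g := by rw [← hg.2, Function.update_eq_self]
      rw [this]; simp [wB]; ring
    have h2 : ∑ g ∈ Finset.univ.filter (fun g : V → Bool => ¬ g v = true), wt p g * h g
        = ∑ g ∈ Finset.univ.filter (fun g : V → Bool => ¬ g v = true),
          (1 - p) * (W' g * h (Function.update g v false)) := by
      refine Finset.sum_congr rfl fun g hg => ?_
      simp only [Finset.mem_filter, Bool.not_eq_true] at hg
      rw [hwt g, hg.2]
      have : Function.update g v false = g := by rw [← hg.2, Function.update_eq_self]
      rw [this]; simp [wB]; ring
    rw [h1, h2, ← Finset.mul_sum, ← Finset.mul_sum,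
      sum_flip v _ (fun g c => by rw [hW', Function.update_idem])]
  have lhs : Ex p (fun g => p * h (Function.update g v true)
      + (1 - p) * h (Function.update g v false))
      = p * (∑ g : V → Bool, wt p g * h (Function.update g v true))
      + (1 - p) * (∑ g : V → Bool, wt p g * h (Function.update g v false)) := by
    rw [Ex, Finset.mul_sum, Finset.mul_sum, ← Finset.sum_add_distrib]
    exact Finset.sum_congr rfl fun g _ => by ring
  rw [lhs, key true, key false, rhs]

lemma Ex_Sm (l : List V) (f : (V → Bool) → ℝ) : Ex p (Sm p l f) = Ex p f := by
  induction l with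
  | nil => rfl
  | cons v l ih =>
    have : Ex p (Sm p (v :: l) f) = Ex p (Sm p l f) := by
      have := Ex_step (p := p) v (Sm p l f)
      simpa [Sm] using this
    rw [this, ih]

lemma Ex_eq_Sm_univ (f : (V → Bool) → ℝ) (g₀ : V → Bool) :
    Ex p f = Sm p Finset.univ.toList f g₀ := by
  have h1 : Ex p f = Ex p (Sm p Finset.univ.toList f) := (Ex_Sm _ f).symm
  have h2 : ∀ g, Sm p Finset.univ.toList f g = Sm p Finset.univ.toList f g₀ := by
    intro g
    exact Sm_indep g g₀ fun v hv => absurd (Finset.mem_toList.2 (Finset.mem_univ v)) hv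
  rw [h1, Ex]
  calc ∑ g : V → Bool, wt p g * Sm p Finset.univ.toList f g
      = ∑ g : V → Bool, wt p g * Sm p Finset.univ.toList f g₀ := by
        refine Finset.sum_congr rfl fun g _ => by rw [h2 g]
    _ = (∑ g : V → Bool, wt p g) * Sm p Finset.univ.toList f g₀ := by
        rw [Finset.sum_mul]
    _ = Sm p Finset.univ.toList f g₀ := by rw [sum_wt, one_mul]

end Stmt4Aux

namespace Stmt4Aux

lemma chord (lam x c : ℝ) (hc : 0 < c) (hx : |x| ≤ c) :
    Real.exp (lam * x) ≤ (c - x) / (2 * c) * Real.exp (-(lam * c))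
      + (c + x) / (2 * c) * Real.exp (lam * c) := by
  have hxc := abs_le.1 hx
  have h1 : 0 ≤ (c - x) / (2 * c) := by
    apply div_nonneg <;> linarith
  have h2 : 0 ≤ (c + x) / (2 * c) := by
    apply div_nonneg <;> linarith
  have hsum : (c - x) / (2 * c) + (c + x) / (2 * c) = 1 := by
    field_simp
    ring
  have hcv := convexOn_exp.2 (Set.mem_univ (-(lam * c))) (Set.mem_univ (lam * c)) h1 h2 hsum
  simp only [smul_eq_mul] at hcv
  have harg : (c - x) / (2 * c) * (-(lam * c)) + (c + x) / (2 * c) * (lam * c) = lam * x := by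
    field_simp
    ring
  rwa [harg] at hcv

lemma two_point {p : ℝ} (hp0 : 0 ≤ p) (hp1 : p ≤ 1) (lam d c : ℝ) (hd : |d| ≤ c) :
    p * Real.exp (lam * (-((1 - p) * d))) + (1 - p) * Real.exp (lam * (p * d))
      ≤ Real.exp (lam ^ 2 * c ^ 2 / 2) := by
  have hc0 : 0 ≤ c := le_trans (abs_nonneg d) hd
  rcases eq_or_lt_of_le hc0 with hc | hc
  · -- c = 0, hence d = 0
    have hd0 : d = 0 := abs_eq_zero.1 (le_antisymm (hc ▸ hd) (abs_nonneg d))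
    subst hd0
    simp [← hc]
  · have hq : (0:ℝ) ≤ 1 - p := by linarith
    have hx1 : |(-((1 - p) * d))| ≤ c := by
      rw [abs_neg, abs_mul, abs_of_nonneg hq]
      calc (1 - p) * |d| ≤ 1 * |d| := by
            apply mul_le_mul_of_nonneg_right _ (abs_nonneg d); linarith
        _ = |d| := one_mul _
        _ ≤ c := hd
    have hx2 : |p * d| ≤ c := by
      rw [abs_mul, abs_of_nonneg hp0]
      calc p * |d| ≤ 1 * |d| := mul_le_mul_of_nonneg_right hp1 (abs_nonneg d)
        _ = |d| := one_mul _
        _ ≤ c := hd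
    have hb1 := chord lam (-((1 - p) * d)) c hc hx1
    have hb2 := chord lam (p * d) c hc hx2
    calc p * Real.exp (lam * (-((1 - p) * d))) + (1 - p) * Real.exp (lam * (p * d))
        ≤ p * ((c - (-((1 - p) * d))) / (2 * c) * Real.exp (-(lam * c))
            + (c + (-((1 - p) * d))) / (2 * c) * Real.exp (lam * c))
          + (1 - p) * ((c - p * d) / (2 * c) * Real.exp (-(lam * c))
            + (c + p * d) / (2 * c) * Real.exp (lam * c)) :=
          add_le_add (mul_le_mul_of_nonneg_left hb1 hp0) (mul_le_mul_of_nonneg_left hb2 hq)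
      _ = (Real.exp (lam * c) + Real.exp (-(lam * c))) / 2 := by
          field_simp
          ring
      _ = Real.cosh (lam * c) := (Real.cosh_eq _).symm
      _ ≤ Real.exp ((lam * c) ^ 2 / 2) := Real.cosh_le_exp_half_sq _
      _ = Real.exp (lam ^ 2 * c ^ 2 / 2) := by rw [mul_pow]

variable {V : Type*} [Fintype V] [DecidableEq V] {p : ℝ}

lemma azuma_core (hp0 : 0 ≤ p) (hp1 : p ≤ 1) (f : (V → Bool) → ℝ) (c : V → ℝ)
    (hf : ∀ g v, |f (Function.update g v true) - f (Function.update g v false)| ≤ c v)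
    (lam : ℝ) :
    ∀ l : List V, l.Nodup → ∀ g : V → Bool,
      Sm p l (fun x => Real.exp (lam * (Sm p l f g - f x))) g
        ≤ Real.exp (lam ^ 2 * (∑ v ∈ l.toFinset, (c v) ^ 2) / 2) := by
  intro l
  induction l with
  | nil => intro _ g; simp [Sm]
  | cons v l ih =>
    intro hnd g
    have hvl : v ∉ l := (List.nodup_cons.1 hnd).1
    have hnd' : l.Nodup := (List.nodup_cons.1 hnd).2
    simp only [Sm]
    set m₁ := Sm p l f (Function.update g v true) with hm1
    set m₀ := Sm p l f (Function.update g v false) with hm0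
    set m := p * m₁ + (1 - p) * m₀ with hmdef
    set K' := Real.exp (lam ^ 2 * (∑ u ∈ l.toFinset, (c u) ^ 2) / 2) with hK'
    have hK'0 : 0 ≤ K' := (Real.exp_pos _).le
    have hq : (0:ℝ) ≤ 1 - p := by linarith
    have hfact : ∀ (b : Bool) (mb : ℝ),
        Sm p l (fun x => Real.exp (lam * (m - f x))) (Function.update g v b)
          = Real.exp (lam * (m - mb))
              * Sm p l (fun x => Real.exp (lam * (mb - f x))) (Function.update g v b) := by
      intro b mb
      have heq : (fun x => Real.exp (lam * (m - f x)))
          = fun x => Real.exp (lam * (m - mb)) * Real.exp (lam * (mb - f x)) := by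
        funext x
        rw [← Real.exp_add]
        congr 1
        ring
      rw [heq, Sm_smul]
    have hIH1 : Sm p l (fun x => Real.exp (lam * (m₁ - f x))) (Function.update g v true) ≤ K' :=
      ih hnd' (Function.update g v true)
    have hIH0 : Sm p l (fun x => Real.exp (lam * (m₀ - f x))) (Function.update g v false) ≤ K' :=
      ih hnd' (Function.update g v false)
    have hd : |m₁ - m₀| ≤ c v := by
      have h1 : m₁ = Sm p l (fun x => f (Function.update x v true)) g := Sm_update hvl f true g
      have h0 : m₀ = Sm p l (fun x => f (Function.update x v false)) g := Sm_update hvl f false g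
      have hsub : m₁ - m₀ = Sm p l
          (fun x => f (Function.update x v true) - f (Function.update x v false)) g := by
        rw [h1, h0, Sm_sub]
      rw [hsub]
      calc |Sm p l (fun x => f (Function.update x v true) - f (Function.update x v false)) g|
          ≤ Sm p l (fun x => |f (Function.update x v true) - f (Function.update x v false)|) g :=
            Sm_abs hp0 hp1 _ g
        _ ≤ Sm p l (fun _ => c v) g := Sm_mono hp0 hp1 (fun x => hf x v) g
        _ = c v := Sm_const _ g
    have hS1 : 0 ≤ Sm p l (fun x => Real.exp (lam * (m₁ - f x))) (Function.update g v true) := by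
      calc (0:ℝ) = Sm p l (fun _ => (0:ℝ)) (Function.update g v true) := (Sm_const _ _).symm
        _ ≤ _ := Sm_mono hp0 hp1 (fun x => (Real.exp_pos _).le) _
    calc p * Sm p l (fun x => Real.exp (lam * (m - f x))) (Function.update g v true)
          + (1 - p) * Sm p l (fun x => Real.exp (lam * (m - f x))) (Function.update g v false)
        = p * (Real.exp (lam * (m - m₁))
              * Sm p l (fun x => Real.exp (lam * (m₁ - f x))) (Function.update g v true))
          + (1 - p) * (Real.exp (lam * (m - m₀))
              * Sm p l (fun x => Real.exp (lam * (m₀ - f x))) (Function.update g v false)) := by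
          rw [hfact true m₁, hfact false m₀]
      _ ≤ p * (Real.exp (lam * (m - m₁)) * K')
          + (1 - p) * (Real.exp (lam * (m - m₀)) * K') := by
          apply add_le_add
          · exact mul_le_mul_of_nonneg_left
              (mul_le_mul_of_nonneg_left hIH1 (Real.exp_pos _).le) hp0
          · exact mul_le_mul_of_nonneg_left
              (mul_le_mul_of_nonneg_left hIH0 (Real.exp_pos _).le) hq
      _ = K' * (p * Real.exp (lam * (m - m₁)) + (1 - p) * Real.exp (lam * (m - m₀))) := by ring
      _ ≤ K' * Real.exp (lam ^ 2 * (c v) ^ 2 / 2) := by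
          apply mul_le_mul_of_nonneg_left _ hK'0
          have e1 : lam * (m - m₁) = lam * (-((1 - p) * (m₁ - m₀))) := by rw [hmdef]; ring
          have e2 : lam * (m - m₀) = lam * (p * (m₁ - m₀)) := by rw [hmdef]; ring
          rw [e1, e2]
          exact two_point hp0 hp1 lam (m₁ - m₀) (c v) hd
      _ = Real.exp (lam ^ 2 * (∑ u ∈ (v :: l).toFinset, (c u) ^ 2) / 2) := by
          rw [hK', ← Real.exp_add, List.toFinset_cons,
            Finset.sum_insert (by simpa using hvl)]
          congr 1
          ring

end Stmt4Aux

noncomputable def pr' {α : Type*} [Fintype α] [DecidableEq α] (p : ℝ)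
    (E : (α → Bool) → Prop) : ℝ :=
  ∑ g : α → Bool, if E g then (∏ v, if g v = true then p else 1 - p) else 0

namespace Stmt4Aux

variable {V : Type*} [Fintype V] [DecidableEq V] {p : ℝ}

lemma pr'_eq (P : (V → Bool) → Prop) :
    pr' p P = ∑ g : V → Bool, (if P g then wt p g else 0) := by
  rfl

lemma pr'_le_one (hp0 : 0 ≤ p) (hp1 : p ≤ 1) (P : (V → Bool) → Prop) : pr' p P ≤ 1 := by
  rw [pr'_eq, ← sum_wt (V := V) (p := p)]
  refine Finset.sum_le_sum fun g _ => ?_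
  split
  · exact le_rfl
  · exact wt_nonneg hp0 hp1 g

lemma pr'_nonneg (hp0 : 0 ≤ p) (hp1 : p ≤ 1) (P : (V → Bool) → Prop) : 0 ≤ pr' p P := by
  rw [pr'_eq]
  refine Finset.sum_nonneg fun g _ => ?_
  split
  · exact wt_nonneg hp0 hp1 g
  · exact le_rfl

lemma main_bound (hp0 : 0 ≤ p) (hp1 : p ≤ 1) (f : (V → Bool) → ℝ) (c : V → ℝ)
    (hf : ∀ g v, |f (Function.update g v true) - f (Function.update g v false)| ≤ c v)
    (t : ℝ) (ht : 0 ≤ t) (hS : 0 < ∑ v : V, (c v) ^ 2)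
    (P : (V → Bool) → Prop) (hP : ∀ g, P g → t ≤ Ex p f - f g) :
    pr' p P ≤ Real.exp (-(t ^ 2) / (2 * ∑ v : V, (c v) ^ 2)) := by
  set S := ∑ v : V, (c v) ^ 2 with hSdef
  set lam := t / S with hlam
  have hlam0 : 0 ≤ lam := div_nonneg ht hS.le
  set g₀ : V → Bool := fun _ => true with hg₀
  have hmu : Ex p f = Sm p Finset.univ.toList f g₀ := Ex_eq_Sm_univ f g₀
  have step1 : pr' p P ≤ ∑ g : V → Bool,
      wt p g * Real.exp (lam * (Ex p f - f g) - lam * t) := by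
    rw [pr'_eq]
    refine Finset.sum_le_sum fun g _ => ?_
    split
    · next hPg =>
      have h1 : 0 ≤ lam * (Ex p f - f g) - lam * t := by
        have := hP g hPg
        have h2 : lam * t ≤ lam * (Ex p f - f g) := mul_le_mul_of_nonneg_left this hlam0
        linarith
      calc wt p g = wt p g * 1 := (mul_one _).symm
        _ ≤ wt p g * Real.exp (lam * (Ex p f - f g) - lam * t) := by
            apply mul_le_mul_of_nonneg_left _ (wt_nonneg hp0 hp1 g)
            rw [show (1:ℝ) = Real.exp 0 from Real.exp_zero.symm]
            exact Real.exp_le_exp.2 h1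
    · exact mul_nonneg (wt_nonneg hp0 hp1 g) (Real.exp_pos _).le
  have step2 : ∑ g : V → Bool, wt p g * Real.exp (lam * (Ex p f - f g) - lam * t)
      = Real.exp (-(lam * t)) * ∑ g : V → Bool, wt p g * Real.exp (lam * (Ex p f - f g)) := by
    rw [Finset.mul_sum]
    refine Finset.sum_congr rfl fun g _ => ?_
    rw [show lam * (Ex p f - f g) - lam * t = -(lam * t) + lam * (Ex p f - f g) from by ring,
      Real.exp_add]
    ring
  have step3 : ∑ g : V → Bool, wt p g * Real.exp (lam * (Ex p f - f g))
      ≤ Real.exp (lam ^ 2 * S / 2) := by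
    have h1 : ∑ g : V → Bool, wt p g * Real.exp (lam * (Ex p f - f g))
        = Ex p (fun g => Real.exp (lam * (Ex p f - f g))) := rfl
    rw [h1, Ex_eq_Sm_univ (fun g => Real.exp (lam * (Ex p f - f g))) g₀, hmu]
    have h2 := azuma_core hp0 hp1 f c hf lam Finset.univ.toList Finset.univ.nodup_toList g₀
    rw [Finset.toList_toFinset] at h2
    exact h2
  calc pr' p P ≤ Real.exp (-(lam * t)) * ∑ g : V → Bool,
        wt p g * Real.exp (lam * (Ex p f - f g)) := by rw [← step2]; exact step1
    _ ≤ Real.exp (-(lam * t)) * Real.exp (lam ^ 2 * S / 2) :=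
        mul_le_mul_of_nonneg_left step3 (Real.exp_pos _).le
    _ = Real.exp (-(t ^ 2) / (2 * S)) := by
        rw [← Real.exp_add]
        congr 1
        rw [hlam]
        field_simp
        ring

end Stmt4Aux

/-- Azuma-type bound: if `V'_1, …, V'_k` are (not necessarily disjoint) b-eternal sets
with `s = max_j |V'_j|` and `a v` is the number of sets containing `v`, then the
probability of ever reaching an all-red generation is at most
`exp(-k² p_b^{2s} / (2 ∑_v a_v²))`. -/
theorem stmt4 {V : Type*} [Fintype V] [DecidableEq V] (G : SimpleGraph V)
    [DecidableRel G.Adj] (step : (V → Bool) → (V → Bool))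
    (hstep : step = majStep G ∨ step = bmajStep G)
    (k s : ℕ) (A : Fin k → Finset V)
    (hs : s = Finset.univ.sup fun j : Fin k => (A j).card)
    (a : V → ℕ)
    (ha : ∀ v, a v = (Finset.univ.filter fun j : Fin k => v ∈ A j).card)
    (heternal : ∀ j : Fin k, ∀ g : V → Bool, (∀ v ∈ A j, g v = true) →
      ∀ t : ℕ, ∃ v, (step^[t] g) v = true)
    (p : ℝ) (hp0 : 0 ≤ p) (hp1 : p ≤ 1) :
    pr p (fun g => ∃ t : ℕ, ∀ v, (step^[t] g) v = false) ≤
      Real.exp (-(k : ℝ) ^ 2 * p ^ (2 * s) / (2 * ∑ v : V, (a v : ℝ) ^ 2)) := by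
  classical
  set P : (V → Bool) → Prop := fun g => ∃ t : ℕ, ∀ v, (step^[t] g) v = false with hPdef
  have hpr : pr p P = pr' p P := rfl
  rcases Nat.eq_zero_or_pos k with hk | hk
  · -- k = 0 : the bound is exp 0 = 1
    subst hk
    rw [hpr]
    refine (Stmt4Aux.pr'_le_one hp0 hp1 P).trans ?_
    norm_num
  by_cases hS : (0:ℝ) < ∑ v : V, ((a v : ℝ)) ^ 2
  swap
  · -- all the a v are zero, so every A j is empty and blue never dies
    have hS0 : ∀ v : V, a v = 0 := by
      have h0 : ∑ v : V, ((a v : ℝ)) ^ 2 = 0 := by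
        have hge : (0:ℝ) ≤ ∑ v : V, ((a v : ℝ)) ^ 2 :=
          Finset.sum_nonneg fun v _ => sq_nonneg _
        exact le_antisymm (not_lt.1 hS) hge
      intro v
      have := (Finset.sum_eq_zero_iff_of_nonneg fun v _ => sq_nonneg ((a v : ℝ))).1 h0
        v (Finset.mem_univ v)
      have : ((a v : ℝ)) = 0 := by
        have := sq_eq_zero_iff.1 this
        exact this
      exact_mod_cast this
    have hAempty : ∀ (j : Fin k) (v : V), v ∉ A j := by
      intro j v hv
      have h0 := hS0 v
      rw [ha v] at h0
      have hj : j ∈ Finset.univ.filter (fun j : Fin k => v ∈ A j) := by simp [hv]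
      have := Finset.card_eq_zero.1 h0
      rw [this] at hj
      exact absurd hj (Finset.notMem_empty j)
    have hPfalse : ∀ g, ¬ P g := by
      rintro g ⟨t, hall⟩
      obtain ⟨v, hv⟩ := heternal ⟨0, hk⟩ g (fun v hv => absurd hv (hAempty _ v)) t
      rw [hall v] at hv
      exact Bool.false_ne_true hv
    have hzero : pr p P = 0 := by
      unfold pr
      exact Finset.sum_eq_zero fun g _ => if_neg (hPfalse g)
    rw [hzero]
    exact (Real.exp_pos _).le
  · -- main case
    set f : (V → Bool) → ℝ :=
      fun g => ∑ j : Fin k, (if ∀ v ∈ A j, g v = true then (1:ℝ) else 0) with hfdef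
    -- bounded differences
    have hfd : ∀ (g : V → Bool) (v : V),
        |f (Function.update g v true) - f (Function.update g v false)| ≤ (a v : ℝ) := by
      intro g v
      simp only [hfdef]
      rw [← Finset.sum_sub_distrib]
      have hterm : ∀ j : Fin k,
          |((if ∀ u ∈ A j, Function.update g v true u = true then (1:ℝ) else 0)
            - (if ∀ u ∈ A j, Function.update g v false u = true then (1:ℝ) else 0))|
          ≤ (if v ∈ A j then (1:ℝ) else 0) := by
        intro j
        by_cases hvj : v ∈ A j
        · simp only [hvj, if_true]
          split_ifs <;> norm_num
        · have key : ∀ b : Bool, (∀ u ∈ A j, Function.update g v b u = true)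
              ↔ (∀ u ∈ A j, g u = true) := by
            intro b
            refine forall₂_congr fun u hu => ?_
            have hne : u ≠ v := fun e => hvj (by rw [← e]; exact hu)
            rw [Function.update_of_ne hne]
          rw [if_congr ((key true).trans (key false).symm) rfl rfl, sub_self, abs_zero]
          simp [hvj]
      calc |∑ j : Fin k, ((if ∀ u ∈ A j, Function.update g v true u = true then (1:ℝ) else 0)
            - (if ∀ u ∈ A j, Function.update g v false u = true then (1:ℝ) else 0))|
          ≤ ∑ j : Fin k, |((if ∀ u ∈ A j, Function.update g v true u = true then (1:ℝ) else 0)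
            - (if ∀ u ∈ A j, Function.update g v false u = true then (1:ℝ) else 0))| :=
            Finset.abs_sum_le_sum_abs _ _
        _ ≤ ∑ j : Fin k, (if v ∈ A j then (1:ℝ) else 0) :=
            Finset.sum_le_sum fun j _ => hterm j
        _ = ((Finset.univ.filter fun j : Fin k => v ∈ A j).card : ℝ) := by
            rw [Finset.sum_boole]
        _ = (a v : ℝ) := by rw [ha v]
    -- expectation of each indicator
    have hind : ∀ j : Fin k,
        (∑ g : V → Bool, Stmt4Aux.wt p g * (if ∀ v ∈ A j, g v = true then (1:ℝ) else 0))
          = p ^ (A j).card := by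
      intro j
      have h1 : ∀ g : V → Bool,
          Stmt4Aux.wt p g * (if ∀ v ∈ A j, g v = true then (1:ℝ) else 0)
          = ∏ v : V, (Stmt4Aux.wB p (g v)
              * (if v ∈ A j then (if g v = true then (1:ℝ) else 0) else 1)) := by
        intro g
        rw [Finset.prod_mul_distrib]
        congr 1
        rw [Finset.prod_ite_mem, Finset.univ_inter, Finset.prod_boole]
        by_cases hb : ∀ v ∈ A j, g v = true
        · rw [if_pos hb, if_pos hb]
        · rw [if_neg hb, if_neg hb]
      calc (∑ g : V → Bool, Stmt4Aux.wt p g * (if ∀ v ∈ A j, g v = true then (1:ℝ) else 0))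
          = ∑ g : V → Bool, ∏ v : V, (Stmt4Aux.wB p (g v)
              * (if v ∈ A j then (if g v = true then (1:ℝ) else 0) else 1)) :=
            Finset.sum_congr rfl fun g _ => h1 g
        _ = ∏ v : V, ∑ b : Bool, (Stmt4Aux.wB p b
              * (if v ∈ A j then (if b = true then (1:ℝ) else 0) else 1)) :=
            (Fintype.prod_sum (fun (v : V) (b : Bool) => Stmt4Aux.wB p b
              * (if v ∈ A j then (if b = true then (1:ℝ) else 0) else 1))).symm
        _ = ∏ v : V, (if v ∈ A j then p else 1) := by
            refine Finset.prod_congr rfl fun v _ => ?_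
            rw [Fintype.sum_bool]
            by_cases hv : v ∈ A j <;> simp [hv, Stmt4Aux.wB]
        _ = p ^ (A j).card := by
            rw [Finset.prod_ite_mem, Finset.univ_inter, Finset.prod_const]
    -- expectation lower bound
    have hEx : Stmt4Aux.Ex p f = ∑ j : Fin k, p ^ (A j).card := by
      unfold Stmt4Aux.Ex
      simp only [hfdef]
      calc ∑ g : V → Bool, Stmt4Aux.wt p g
            * ∑ j : Fin k, (if ∀ v ∈ A j, g v = true then (1:ℝ) else 0)
          = ∑ g : V → Bool, ∑ j : Fin k,
              Stmt4Aux.wt p g * (if ∀ v ∈ A j, g v = true then (1:ℝ) else 0) := by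
            refine Finset.sum_congr rfl fun g _ => ?_
            rw [Finset.mul_sum]
        _ = ∑ j : Fin k, ∑ g : V → Bool,
              Stmt4Aux.wt p g * (if ∀ v ∈ A j, g v = true then (1:ℝ) else 0) :=
            Finset.sum_comm
        _ = ∑ j : Fin k, p ^ (A j).card := Finset.sum_congr rfl fun j _ => hind j
    have hExge : (k : ℝ) * p ^ s ≤ Stmt4Aux.Ex p f := by
      rw [hEx]
      calc (k : ℝ) * p ^ s = ∑ _j : Fin k, p ^ s := by
            rw [Finset.sum_const, Finset.card_univ, Fintype.card_fin, nsmul_eq_mul]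
        _ ≤ ∑ j : Fin k, p ^ (A j).card := by
            refine Finset.sum_le_sum fun j _ => ?_
            refine pow_le_pow_of_le_one hp0 hp1 ?_
            rw [hs]
            exact Finset.le_sup (f := fun j : Fin k => (A j).card) (Finset.mem_univ j)
    -- on the event, f = 0
    have hfP : ∀ g, P g → f g = 0 := by
      rintro g ⟨t, hall⟩
      simp only [hfdef]
      refine Finset.sum_eq_zero fun j _ => ?_
      rw [if_neg]
      intro hblue
      obtain ⟨v, hv⟩ := heternal j g hblue t
      rw [hall v] at hv
      exact Bool.false_ne_true hv
    have hP2 : ∀ g, P g → (k : ℝ) * p ^ s ≤ Stmt4Aux.Ex p f - f g := by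
      intro g hg
      rw [hfP g hg, sub_zero]
      exact hExge
    have ht0 : (0:ℝ) ≤ (k : ℝ) * p ^ s := by positivity
    have hb := Stmt4Aux.main_bound hp0 hp1 f (fun v => (a v : ℝ)) hfd
      ((k : ℝ) * p ^ s) ht0 hS P hP2
    rw [hpr]
    refine hb.trans (le_of_eq ?_)
    congr 1
    have hps : ((k : ℝ) * p ^ s) ^ 2 = (k : ℝ) ^ 2 * p ^ (2 * s) := by
      rw [mul_pow, ← pow_mul, mul_comm s 2]
    rw [hps]
    ring
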